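/- Let d ≥ 1, let 0 < q̲ ≤ q̄, and let K = {M ∈ S_d : q̲‖ξ‖² ≤ ξᵀMξ ≤ q̄‖ξ‖² for all ξ ∈ ℝ^d}, where S_d is the space of real symmetric d×d matrices with inner product M·N = trace(MN). Let (Ω, μ) be a finite measure space, let G : Ω → S_d be integrable (with respect to the Frobenius norm), and let Q₀ : Ω → S_d be measurable with Q₀(x) ∈ K for μ-a.e. x. Suppose that for every measurable Q : Ω → S_d with Q(x) ∈ K for μ-a.e. x one has ∫_Ω G(x) · (Q(x) − Q₀(x)) dμ(x) ≤ 0. Then for μ-a.e. x ∈ Ω, G(x) · (M − Q₀(x)) ≤ 0 for every M ∈ K. -/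

import Mathlib

attribute [local instance] Matrix.frobeniusNormedAddCommGroup

/-- The product σ-algebra on matrix-valued functions. -/
def Matrix.measurableSpace (m n α : Type*) [MeasurableSpace α] :
    MeasurableSpace (Matrix m n α) :=
  (inferInstance : MeasurableSpace (m → n → α))

attribute [local instance] Matrix.measurableSpace

open Matrix MeasureTheory

private lemma trace_mul_expand {d : ℕ} (A B : Matrix (Fin d) (Fin d) ℝ) :
    Matrix.trace (A * B) = ∑ i, ∑ j, A i j * B j i := by
  simp [Matrix.trace, Matrix.mul_apply, Matrix.diag]

private lemma entry_le_frobenius {d : ℕ} (A : Matrix (Fin d) (Fin d) ℝ) (i j : Fin d) :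
    |A i j| ≤ ‖A‖ := by
  rw [Matrix.frobenius_norm_def]
  have h0 : (0:ℝ) ≤ ‖A i j‖ ^ (2:ℝ) := Real.rpow_nonneg (norm_nonneg _) _
  have h1 : ‖A i j‖ ^ (2:ℝ) ≤ ∑ i', ∑ j', ‖A i' j'‖ ^ (2:ℝ) := by
    calc ‖A i j‖ ^ (2:ℝ) ≤ ∑ j', ‖A i j'‖ ^ (2:ℝ) :=
          Finset.single_le_sum (fun _ _ => Real.rpow_nonneg (norm_nonneg _) _)
            (Finset.mem_univ j)
      _ ≤ ∑ i', ∑ j', ‖A i' j'‖ ^ (2:ℝ) :=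
          Finset.single_le_sum (fun _ _ => Finset.sum_nonneg fun _ _ =>
            Real.rpow_nonneg (norm_nonneg _) _) (Finset.mem_univ i)
  have h2 : |A i j| = (‖A i j‖ ^ (2:ℝ)) ^ (1/2:ℝ) := by
    rw [← Real.rpow_mul (norm_nonneg _)]
    norm_num [Real.norm_eq_abs]
  rw [h2]
  exact Real.rpow_le_rpow h0 h1 (by norm_num)

private lemma entry_bound_of_mem_K {d : ℕ} (ql qu : ℝ) (hql : 0 < ql) (hle : ql ≤ qu)
    (M : Matrix (Fin d) (Fin d) ℝ) (hs : M.IsSymm)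
    (hq : ∀ ξ : Fin d → ℝ,
        ql * (∑ i, ξ i ^ 2) ≤ ξ ⬝ᵥ M.mulVec ξ ∧ ξ ⬝ᵥ M.mulVec ξ ≤ qu * (∑ i, ξ i ^ 2))
    (i j : Fin d) : |M i j| ≤ qu := by
  have hdiag : ∀ k, ql ≤ M k k ∧ M k k ≤ qu := by
    intro k
    have := hq (Pi.single k 1)
    simpa [Matrix.mulVec_single, single_dotProduct, Pi.single_apply, sq] using this
  rcases eq_or_ne i j with rfl | hij
  · rw [abs_le]
    exact ⟨le_trans (by linarith) (hdiag i).1, (hdiag i).2⟩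
  · have hptw : ∀ k, ((Pi.single i 1 + Pi.single j 1 : Fin d → ℝ) k) ^ 2
        = (if k = i then (1:ℝ) else 0) + (if k = j then 1 else 0) := by
      intro k
      rcases eq_or_ne k i with rfl | h1 <;> rcases eq_or_ne k j with rfl | h2 <;>
        simp_all [Pi.single_apply]
    have hsum : ∑ k, ((Pi.single i 1 + Pi.single j 1 : Fin d → ℝ) k) ^ 2 = 2 := by
      simp only [hptw, Finset.sum_add_distrib, Finset.sum_ite_eq', Finset.mem_univ, if_true]
      norm_num
    have hquad : (Pi.single i 1 + Pi.single j 1 : Fin d → ℝ) ⬝ᵥ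
        M.mulVec (Pi.single i 1 + Pi.single j 1) = M i i + M j j + 2 * M i j := by
      simp [Matrix.mulVec_add, add_dotProduct, dotProduct_add,
        Matrix.mulVec_single, single_dotProduct, hs.apply i j]
      ring
    have := hq (Pi.single i 1 + Pi.single j 1)
    rw [hsum, hquad] at this
    have h1 := (hdiag i).1; have h2 := (hdiag i).2
    have h3 := (hdiag j).1; have h4 := (hdiag j).2
    rw [abs_le]; constructor <;> nlinarith [this.1, this.2]

/-- Localization argument (key step of Lemma 3.8): if the integrated variational
inequality holds for every measurable `K`-valued matrix function `Q`, then the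
pointwise variational inequality holds almost everywhere. -/
theorem localization_of_integral_variational_inequality
    {Ω : Type*} [MeasurableSpace Ω] (μ : Measure Ω) [IsFiniteMeasure μ]
    (d : ℕ) (hd : 1 ≤ d) (ql qu : ℝ) (hql : 0 < ql) (hle : ql ≤ qu)
    (K : Set (Matrix (Fin d) (Fin d) ℝ))
    (hK : K = {M | M.IsSymm ∧ ∀ ξ : Fin d → ℝ,
        ql * (∑ i, ξ i ^ 2) ≤ ξ ⬝ᵥ M.mulVec ξ ∧ ξ ⬝ᵥ M.mulVec ξ ≤ qu * (∑ i, ξ i ^ 2)})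
    (G : Ω → Matrix (Fin d) (Fin d) ℝ) (hG : @Integrable (Matrix (Fin d) (Fin d) ℝ)
      (Matrix.frobeniusNormedAddCommGroup : NormedAddCommGroup (Matrix (Fin d) (Fin d) ℝ)).toUniformSpace.toTopologicalSpace
      _ Ω _ G μ)
    (Q₀ : Ω → Matrix (Fin d) (Fin d) ℝ) (hQ₀m : Measurable Q₀)
    (hQ₀K : ∀ᵐ x ∂μ, Q₀ x ∈ K)
    (h : ∀ Q : Ω → Matrix (Fin d) (Fin d) ℝ, Measurable Q → (∀ᵐ x ∂μ, Q x ∈ K) →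
      ∫ x, Matrix.trace (G x * (Q x - Q₀ x)) ∂μ ≤ 0) :
    ∀ᵐ x ∂μ, ∀ M ∈ K, Matrix.trace (G x * (M - Q₀ x)) ≤ 0 := by
  -- measurable representative of G
  haveI : BorelSpace (Matrix (Fin d) (Fin d) ℝ) := Pi.borelSpace
  obtain ⟨G', hG'sm, hGG'⟩ : ∃ G', StronglyMeasurable G' ∧ G =ᵐ[μ] G' :=
    ⟨hG.1.mk G, hG.1.stronglyMeasurable_mk, hG.1.ae_eq_mk⟩
  haveI : TopologicalSpace.PseudoMetrizableSpace (Matrix (Fin d) (Fin d) ℝ) :=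
    inferInstanceAs (TopologicalSpace.PseudoMetrizableSpace (Fin d → Fin d → ℝ))
  have hG'm : Measurable G' := hG'sm.measurable
  have hG'int : @Integrable (Matrix (Fin d) (Fin d) ℝ)
      (Matrix.frobeniusNormedAddCommGroup : NormedAddCommGroup (Matrix (Fin d) (Fin d) ℝ)).toUniformSpace.toTopologicalSpace
      _ Ω _ G' μ := hG.congr hGG'
  -- entry bound on K
  have hKB : ∀ M ∈ K, ∀ i j, |M i j| ≤ qu := by
    intro M hM i j
    rw [hK] at hM
    exact entry_bound_of_mem_K ql qu hql hle M hM.1 hM.2 i j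
  -- the pointwise pairing, as a function of a matrix in pi form
  set f : (Fin d → Fin d → ℝ) → Ω → ℝ :=
    fun N x => ∑ i, ∑ j, G' x i j * (N j i - Q₀ x j i) with hfdef
  have hfm : ∀ N, Measurable (f N) := by
    intro N
    apply Finset.measurable_sum _ (fun i _ => ?_)
    apply Finset.measurable_sum _ (fun j _ => ?_)
    exact ((measurable_pi_apply j).comp ((measurable_pi_apply i).comp hG'm)).mul
      (measurable_const.sub ((measurable_pi_apply i).comp ((measurable_pi_apply j).comp hQ₀m)))
  -- integrability of f M for M ∈ K
  have hfint : ∀ M ∈ K, Integrable (f M) μ := by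
    intro M hM
    apply Integrable.mono' (hG'int.norm.const_mul ((d:ℝ)^2 * (2*qu)))
      (hfm M).aestronglyMeasurable
    filter_upwards [hQ₀K] with x hx
    rw [Real.norm_eq_abs]
    calc |f M x| ≤ ∑ i, ∑ j, |G' x i j * (M j i - Q₀ x j i)| := by
          refine (Finset.abs_sum_le_sum_abs _ _).trans ?_
          exact Finset.sum_le_sum fun i _ => Finset.abs_sum_le_sum_abs _ _
      _ ≤ ∑ _i : Fin d, ∑ _j : Fin d, ‖G' x‖ * (2*qu) := by
          refine Finset.sum_le_sum fun i _ => Finset.sum_le_sum fun j _ => ?_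
          rw [abs_mul]
          have h1 : |G' x i j| ≤ ‖G' x‖ := entry_le_frobenius _ i j
          have h2 : |M j i - Q₀ x j i| ≤ 2 * qu := by
            have := hKB M hM j i
            have := hKB (Q₀ x) hx j i
            have := abs_sub (M j i) (Q₀ x j i)
            calc |M j i - Q₀ x j i| ≤ |M j i| + |Q₀ x j i| := abs_sub _ _
              _ ≤ 2 * qu := by linarith [hKB M hM j i, hKB (Q₀ x) hx j i]
          exact mul_le_mul h1 h2 (abs_nonneg _) (norm_nonneg _)
      _ = (d:ℝ)^2 * (2*qu) * ‖G' x‖ := by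
          simp [Finset.sum_const, Finset.card_univ]
          ring
  -- key localization step for a fixed M ∈ K
  have key : ∀ M ∈ K, ∀ᵐ x ∂μ, f M x ≤ 0 := by
    intro M hM
    set A := {x | 0 < f M x} with hAdef
    have hAm : MeasurableSet A := measurableSet_lt measurable_const (hfm M)
    set Q : Ω → Matrix (Fin d) (Fin d) ℝ := A.piecewise (fun _ => M) Q₀ with hQdef
    have hQm : Measurable Q := Measurable.piecewise hAm measurable_const hQ₀m
    have hQK : ∀ᵐ x ∂μ, Q x ∈ K := by
      filter_upwards [hQ₀K] with x hx
      by_cases hxA : x ∈ A <;> simp [hQdef, Set.piecewise, hxA, hM, hx]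
    have hint := h Q hQm hQK
    have heq : (fun x => Matrix.trace (G x * (Q x - Q₀ x))) =ᵐ[μ] A.indicator (f M) := by
      filter_upwards [hGG'] with x hx
      by_cases hxA : x ∈ A
      · simp [hQdef, Set.piecewise, hxA, Set.indicator_of_mem hxA, trace_mul_expand, hx,
          hfdef, Matrix.sub_apply]
      · simp [hQdef, Set.piecewise, hxA, Set.indicator_of_notMem hxA]
    rw [integral_congr_ae heq, integral_indicator hAm] at hint
    have hnonneg : 0 ≤ᵐ[μ.restrict A] f M := by
      filter_upwards [ae_restrict_mem hAm] with x hx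
      exact le_of_lt hx
    have hiff := setIntegral_pos_iff_support_of_nonneg_ae hnonneg ((hfint M hM).integrableOn)
    have hA0 : μ A = 0 := by
      by_contra h0
      have hsub : A ⊆ Function.support (f M) ∩ A := fun x hx => ⟨ne_of_gt hx, hx⟩
      have hpos : 0 < μ (Function.support (f M) ∩ A) :=
        lt_of_lt_of_le (pos_iff_ne_zero.mpr h0) (measure_mono hsub)
      exact absurd (hiff.2 hpos) (not_lt.2 hint)
    rw [ae_iff]
    simpa [hAdef, not_le] using hA0
  -- countable dense subset of K
  have hsep : TopologicalSpace.IsSeparable (show Set (Fin d → Fin d → ℝ) from K) :=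
    TopologicalSpace.IsSeparable.of_separableSpace _
  obtain ⟨D, hDK, hDc, hDd⟩ := hsep.exists_countable_dense_subset
  have hae : ∀ᵐ x ∂μ, ∀ N ∈ D, f N x ≤ 0 :=
    (ae_ball_iff hDc).2 (fun N hN => key N (hDK hN))
  filter_upwards [hae, hGG'] with x hx hGx
  intro M hM
  have hMc : (show Fin d → Fin d → ℝ from M) ∈ closure D := hDd hM
  have hcont : Continuous (fun N : Fin d → Fin d → ℝ => f N x) := by
    apply continuous_finset_sum; intro i _
    apply continuous_finset_sum; intro j _
    exact continuous_const.mul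
      ((continuous_apply_apply j i).sub continuous_const)
  have hcl : IsClosed {N : Fin d → Fin d → ℝ | f N x ≤ 0} := isClosed_le hcont continuous_const
  have hfM : f M x ≤ 0 :=
    (IsClosed.closure_subset_iff hcl).2 (fun N hN => hx N hN) hMc
  rw [hGx, trace_mul_expand]
  simpa [hfdef, Matrix.sub_apply] using hfM
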